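/- Let H be a complex Hilbert space and let A, B be positive invertible bounded operators on H. Then for every v ∈ (0,1), the weighted operator logarithmic mean satisfies L_v(A,B) = (1−v)·L(A♯_v B, A) + v·L(A♯_v B, B). -/

import Mathlib

/-- Scalar weighted logarithmic mean `L_v(a,b)`, extended by `L_v(a,a) = a`. -/
noncomputable def wLogScalar (v a b : ℝ) : ℝ :=
  if a = b then a else
    (1 / (Real.log a - Real.log b)) *
      (((1 - v) / v) * (a - a ^ (1 - v) * b ^ v) + (v / (1 - v)) * (a ^ (1 - v) * b ^ v - b))

/-- Scalar weighted identric mean `I_v(a,b)`, extended by `I_v(a,a) = a`. -/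
noncomputable def wIdScalar (v a b : ℝ) : ℝ :=
  if a = b then a else
    Real.exp (-1) *
      ((1 - v) * a + v * b) ^
        ((1 - 2 * v) * ((1 - v) * a + v * b) / (v * (1 - v) * (b - a))) *
      (b ^ (v * b / (1 - v)) / a ^ ((1 - v) * a / v)) ^ (b - a)⁻¹

variable {H : Type*} [NormedAddCommGroup H] [InnerProductSpace ℂ H] [CompleteSpace H]

/-- The operator mean `m_f(A,B) = A^{1/2} f(A^{-1/2} B A^{-1/2}) A^{1/2}` associated to a
function `f : (0,∞) → ℝ` with `f(1) = 1`, via the continuous functional calculus. -/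
noncomputable def opMeanOf (f : ℝ → ℝ) (A B : H →L[ℂ] H) : H →L[ℂ] H :=
  cfc Real.sqrt A *
    cfc f (Ring.inverse (cfc Real.sqrt A) * B * Ring.inverse (cfc Real.sqrt A)) *
      cfc Real.sqrt A

/-- The weighted operator arithmetic mean `A ∇_v B = (1-v)A + vB`. -/
noncomputable def opWArith (v : ℝ) (A B : H →L[ℂ] H) : H →L[ℂ] H :=
  (1 - v : ℝ) • A + v • B

/-- The weighted operator geometric mean `A ♯_v B = A^{1/2}(A^{-1/2}BA^{-1/2})^v A^{1/2}`. -/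
noncomputable def opWGeom (v : ℝ) (A B : H →L[ℂ] H) : H →L[ℂ] H :=
  opMeanOf (fun x => x ^ v) A B

/-- The operator logarithmic mean, with representing function `f_L(x) = (x-1)/log x`. -/
noncomputable def opLog (A B : H →L[ℂ] H) : H →L[ℂ] H :=
  opMeanOf (fun x => if x = 1 then 1 else (x - 1) / Real.log x) A B

/-- The operator identric mean, with representing function `f_I(x) = e⁻¹ x^{x/(x-1)}`. -/
noncomputable def opId (A B : H →L[ℂ] H) : H →L[ℂ] H :=
  opMeanOf (fun x => if x = 1 then 1 else Real.exp (-1) * x ^ (x / (x - 1))) A B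

/-- The weighted operator logarithmic mean, with representing function `F_{L_v}(x) = L_v(1,x)`. -/
noncomputable def opWLog (v : ℝ) (A B : H →L[ℂ] H) : H →L[ℂ] H :=
  opMeanOf (fun x => wLogScalar v 1 x) A B

/-- The weighted operator identric mean, with representing function `F_{I_v}(x) = I_v(1,x)`. -/
noncomputable def opWId (v : ℝ) (A B : H →L[ℂ] H) : H →L[ℂ] H :=
  opMeanOf (fun x => wIdScalar v 1 x) A B

open Filter Set

/- ### scalar continuity lemmas -/

lemma tendsto_fL : Tendsto (fun x : ℝ => (x - 1) / Real.log x) (nhdsWithin 1 {(1:ℝ)}ᶜ) (nhds 1) := by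
  have h : HasDerivAt Real.log 1 1 := by
    simpa using Real.hasDerivAt_log one_ne_zero
  have h2 := hasDerivAt_iff_tendsto_slope.mp h
  have h3 := h2.inv₀ one_ne_zero
  simp only [inv_one] at h3
  refine h3.congr fun y => ?_
  simp [slope_def_field, Real.log_one, inv_div]

lemma contAt_fL : ContinuousAt (fun x : ℝ => if x = 1 then 1 else (x - 1) / Real.log x) 1 := by
  rw [ContinuousAt]
  have h1 : (if (1:ℝ) = 1 then (1:ℝ) else (1 - 1) / Real.log 1) = 1 := if_pos rfl
  rw [h1]
  nth_rewrite 1 [← nhdsNE_sup_pure (1:ℝ)]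
  rw [tendsto_sup]
  constructor
  · refine tendsto_fL.congr' ?_
    filter_upwards [self_mem_nhdsWithin] with y hy
    exact (if_neg hy).symm
  · rw [tendsto_pure_left]
    intro s hs
    simpa [h1] using mem_of_mem_nhds hs

lemma contOn_fL : ContinuousOn (fun x : ℝ => if x = 1 then 1 else (x - 1) / Real.log x) (Set.Ioi 0) := by
  intro x hx
  by_cases hx1 : x = 1
  · subst hx1; exact contAt_fL.continuousWithinAt
  · have hlog : Real.log x ≠ 0 := Real.log_ne_zero_of_pos_of_ne_one hx hx1
    have hca : ContinuousAt (fun y : ℝ => (y - 1) / Real.log y) x :=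
      (continuousAt_id.sub continuousAt_const).div
        (Real.continuousAt_log (ne_of_gt hx)) hlog
    refine (hca.congr ?_).continuousWithinAt
    filter_upwards [isOpen_ne.mem_nhds hx1] with y hy
    simp [if_neg hy]

/- ### cfc conjugation -/

section conj
variable {A : Type*} [NormedRing A] [StarRing A] [NormedAlgebra ℝ A]
  [ContinuousFunctionalCalculus ℝ A IsSelfAdjoint]
  [ContinuousMap.UniqueHom ℝ A]

lemma cfc_conj (u w : A) (h1 : u * star u = 1) (h2 : star u * u = 1)
    (hw : IsSelfAdjoint w) (f : ℝ → ℝ) (hf : ContinuousOn f (spectrum ℝ w)) :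
    cfc f (u * w * star u) = u * cfc f w * star u := by
  have hw' : IsSelfAdjoint (u * w * star u) := hw.conjugate u
  set U : Aˣ := ⟨u, star u, h1, h2⟩ with hU
  have hspec : spectrum ℝ (u * w * star u) = spectrum ℝ w := by
    have := spectrum.units_conjugate (R := ℝ) (a := w) (u := U)
    simpa [hU] using this
  let e : C(spectrum ℝ w, spectrum ℝ (u * w * star u)) :=
    ⟨fun x => ⟨(x : ℝ), hspec.symm ▸ x.2⟩, by fun_prop⟩
  let φ : C(spectrum ℝ (u * w * star u), ℝ) →⋆ₐ[ℝ] A :=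
    { toFun := fun g => u * cfcHom hw (g.comp e) * star u
      map_one' := by simp [h1]
      map_mul' := fun g₁ g₂ => by
        show u * cfcHom hw ((g₁ * g₂).comp e) * star u =
          (u * cfcHom hw (g₁.comp e) * star u) * (u * cfcHom hw (g₂.comp e) * star u)
        rw [ContinuousMap.mul_comp, map_mul]
        simp only [mul_assoc]
        rw [← mul_assoc (star u) u, h2, one_mul]
      map_zero' := by
        show u * cfcHom hw ((0 : C(spectrum ℝ (u * w * star u), ℝ)).comp e) * star u = 0
        rw [ContinuousMap.zero_comp, map_zero, mul_zero, zero_mul]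
      map_add' := fun g₁ g₂ => by
        show u * cfcHom hw ((g₁ + g₂).comp e) * star u = _
        rw [ContinuousMap.add_comp, map_add, mul_add, add_mul]
      commutes' := fun r => by
        show u * cfcHom hw ((algebraMap ℝ _ r : C(spectrum ℝ (u * w * star u), ℝ)).comp e) * star u = _
        have : ((algebraMap ℝ C(spectrum ℝ (u * w * star u), ℝ) r).comp e)
            = algebraMap ℝ C(spectrum ℝ w, ℝ) r := by ext x; rfl
        rw [this, AlgHomClass.commutes]
        simp only [Algebra.algebraMap_eq_smul_one, mul_smul_comm, smul_mul_assoc, mul_one, h1]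
      map_star' := fun g => by
        show u * cfcHom hw ((star g).comp e) * star u = star (u * cfcHom hw (g.comp e) * star u)
        have hsg : (star g).comp e = star (g.comp e) := rfl
        rw [hsg, map_star, star_mul, star_mul, star_star,
          (cfcHom_predicate hw (g.comp e)).star_eq, mul_assoc] }
  have hcont : Continuous φ := by
    show Continuous fun g : C(spectrum ℝ (u * w * star u), ℝ) => u * cfcHom hw (g.comp e) * star u
    exact (continuous_const.mul ((cfcHom_continuous hw).comp
      (ContinuousMap.continuous_precomp e))).mul continuous_const
  have hid : φ ((ContinuousMap.id ℝ).restrict (spectrum ℝ (u * w * star u))) = u * w * star u := by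
    show u * cfcHom hw (((ContinuousMap.id ℝ).restrict (spectrum ℝ (u * w * star u))).comp e) * star u = u * w * star u
    have : (((ContinuousMap.id ℝ).restrict (spectrum ℝ (u * w * star u))).comp e) =
        (ContinuousMap.id ℝ).restrict (spectrum ℝ w) := by ext x; rfl
    rw [this, cfcHom_id hw]
  have key := cfcHom_eq_of_continuous_of_map_id hw' φ hcont hid
  have hf' : ContinuousOn f (spectrum ℝ (u * w * star u)) := hspec ▸ hf
  rw [cfc_apply f (u * w * star u) hw' hf', key]
  show u * cfcHom hw ((⟨_, hf'.restrict⟩ : C(spectrum ℝ (u * w * star u), ℝ)).comp e) * star u = _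
  have : ((⟨_, hf'.restrict⟩ : C(spectrum ℝ (u * w * star u), ℝ)).comp e) =
      (⟨_, hf.restrict⟩ : C(spectrum ℝ w, ℝ)) := by ext x; rfl
  rw [this, cfc_apply f w hw hf]

end conj

/- ### operator helpers -/

section ops
variable {a b s p r : H →L[ℂ] H}

lemma spec_pos (ha : 0 ≤ a) (hau : IsUnit a) : spectrum ℝ a ⊆ Set.Ioi 0 := by
  intro x hx
  refine lt_of_le_of_ne (spectrum_nonneg_of_nonneg ha hx) ?_
  rintro rfl
  exact (spectrum.zero_notMem_iff ℝ).mpr hau hx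

lemma sqrt_nonneg' (ha : 0 ≤ a) : 0 ≤ cfc Real.sqrt a :=
  cfc_nonneg fun x _ => Real.sqrt_nonneg x

lemma sqrt_mul_self' (ha : 0 ≤ a) : cfc Real.sqrt a * cfc Real.sqrt a = a := by
  rw [← cfc_mul _ _ a]
  conv_rhs => rw [← cfc_id ℝ a ha.isSelfAdjoint]
  exact cfc_congr fun x hx => Real.mul_self_sqrt (spectrum_nonneg_of_nonneg ha hx)

lemma sqrt_isUnit (ha : 0 ≤ a) (hau : IsUnit a) : IsUnit (cfc Real.sqrt a) :=
  (isUnit_cfc_iff Real.sqrt a).mpr fun x hx => ne_of_gt (Real.sqrt_pos.mpr (spec_pos ha hau hx))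

lemma sqrt_sa (ha : 0 ≤ a) : IsSelfAdjoint (cfc Real.sqrt a) :=
  (sqrt_nonneg' ha).isSelfAdjoint

/-- Congruence ("transformer") identity for `opMeanOf`. -/
lemma opMeanOf_conj (f : ℝ → ℝ) (hf : ContinuousOn f (Set.Ioi 0))
    (hs : 0 ≤ s) (hsu : IsUnit s) (hp : 0 ≤ p) (hpu : IsUnit p)
    (hr : 0 ≤ r) (hru : IsUnit r) :
    opMeanOf f (s * p * s) (s * r * s) = s * opMeanOf f p r * s := by
  set Tp := cfc Real.sqrt p with hTp
  have hTp2 : Tp * Tp = p := sqrt_mul_self' hp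
  have hTpu : IsUnit Tp := sqrt_isUnit hp hpu
  have hTpsa : IsSelfAdjoint Tp := sqrt_sa hp
  set p' := s * p * s with hp'def
  have hp' : 0 ≤ p' := by
    have := star_right_conjugate_nonneg hp s
    rwa [hs.isSelfAdjoint.star_eq] at this
  have hp'u : IsUnit p' := (hsu.mul hpu).mul hsu
  set T := cfc Real.sqrt p' with hT
  have hT2 : T * T = p' := sqrt_mul_self' hp'
  have hTu : IsUnit T := sqrt_isUnit hp' hp'u
  have hTsa : IsSelfAdjoint T := sqrt_sa hp'
  set iT := Ring.inverse T with hiT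
  set iTp := Ring.inverse Tp with hiTp
  have hiTsa : IsSelfAdjoint iT := hTsa.ringInverse
  have hiTpsa : IsSelfAdjoint iTp := hTpsa.ringInverse
  have hTiT : T * iT = 1 := Ring.mul_inverse_cancel T hTu
  have hiTT : iT * T = 1 := Ring.inverse_mul_cancel T hTu
  have hTpiTp : Tp * iTp = 1 := Ring.mul_inverse_cancel Tp hTpu
  have hiTpTp : iTp * Tp = 1 := Ring.inverse_mul_cancel Tp hTpu
  set u := iT * s * Tp with hu
  have hstaru : star u = Tp * s * iT := by
    rw [hu, star_mul, star_mul, hiTsa.star_eq, hs.isSelfAdjoint.star_eq, hTpsa.star_eq, mul_assoc]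
  have h1 : u * star u = 1 := by
    rw [hstaru, hu]
    calc iT * s * Tp * (Tp * s * iT) = iT * (s * (Tp * Tp) * s) * iT := by noncomm_ring
    _ = iT * (T * T) * iT := by rw [hTp2, hT2]
    _ = (iT * T) * (T * iT) := by noncomm_ring
    _ = 1 := by rw [hiTT, hTiT, one_mul]
  have h2 : star u * u = 1 := by
    rw [hstaru, hu]
    have hq : (iT * iT) * (T * T) = 1 := by
      calc (iT * iT) * (T * T) = iT * (iT * T) * T := by noncomm_ring
      _ = 1 := by rw [hiTT, mul_one, hiTT]
    have hq' : (T * T) * (iT * iT) = 1 := by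
      calc (T * T) * (iT * iT) = T * (T * iT) * iT := by noncomm_ring
      _ = 1 := by rw [hTiT, mul_one, hTiT]
    set X := Tp * s * iT * (iT * s * Tp) with hX
    have hXu : IsUnit X := by
      have hX2 : X = Tp * s * iT * iT * s * Tp := by rw [hX]; noncomm_ring
      rw [hX2]
      exact ((((hTpu.mul hsu).mul (isUnit_ringInverse.mpr hTu)).mul
        (isUnit_ringInverse.mpr hTu)).mul hsu).mul hTpu
    have hXX : X * X = X := by
      have hmid : (iT * s * Tp) * (Tp * s * iT) = 1 := by
        calc (iT * s * Tp) * (Tp * s * iT) = iT * (s * (Tp * Tp) * s) * iT := by noncomm_ring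
        _ = (iT * T) * (T * iT) := by rw [hTp2, ← hp'def, ← hT2]; noncomm_ring
        _ = 1 := by rw [hiTT, hTiT, one_mul]
      calc X * X = (Tp * s * iT) * ((iT * s * Tp) * (Tp * s * iT)) * (iT * s * Tp) := by
            rw [hX]; noncomm_ring
      _ = X := by rw [hmid, mul_one, hX]
    calc Tp * s * iT * (iT * s * Tp) = X := by rw [hX]
    _ = 1 := by
        rcases hXu with ⟨xu, hxu⟩
        have h := congrArg (fun y => (↑xu⁻¹ : H →L[ℂ] H) * y) hXX
        simp only [← hxu, ← mul_assoc, Units.inv_mul, one_mul] at h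
        exact hxu ▸ h
  -- the inner elements
  set W := iTp * r * iTp with hW
  have hWnn : 0 ≤ W := by
    have := star_right_conjugate_nonneg hr iTp
    rwa [hiTpsa.star_eq] at this
  have hWu : IsUnit W := ((isUnit_ringInverse.mpr hTpu).mul hru).mul (isUnit_ringInverse.mpr hTpu)
  have hWsa : IsSelfAdjoint W := hWnn.isSelfAdjoint
  have hfW : ContinuousOn f (spectrum ℝ W) := hf.mono (spec_pos hWnn hWu)
  have hconj : u * W * star u = iT * (s * r * s) * iT := by
    rw [hu, hstaru, hW]
    calc iT * s * Tp * (iTp * r * iTp) * (Tp * s * iT)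
        = iT * s * ((Tp * iTp) * r * (iTp * Tp)) * s * iT := by noncomm_ring
    _ = iT * (s * r * s) * iT := by rw [hTpiTp, hiTpTp, one_mul, mul_one]; noncomm_ring
  show T * cfc f (iT * (s * r * s) * iT) * T = s * (Tp * cfc f W * Tp) * s
  rw [← hconj, cfc_conj u W h1 h2 hWsa f hfW]
  have hTu' : T * u = s * Tp := by
    rw [hu]
    calc T * (iT * s * Tp) = (T * iT) * s * Tp := by noncomm_ring
    _ = s * Tp := by rw [hTiT, one_mul]
  have hu'T : star u * T = Tp * s := by
    rw [hstaru, mul_assoc, hiTT, mul_one]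
  calc T * (u * cfc f W * star u) * T = (T * u) * cfc f W * (star u * T) := by noncomm_ring
  _ = (s * Tp) * cfc f W * (Tp * s) := by rw [hTu', hu'T]
  _ = s * (Tp * cfc f W * Tp) * s := by noncomm_ring

end ops

section ops2
variable {x : H →L[ℂ] H}

lemma opMeanOf_cfc (f qf rf : ℝ → ℝ) (x : H →L[ℂ] H) (hx : 0 ≤ x) (hxu : IsUnit x)
    (hf : ContinuousOn f (Set.Ioi 0)) (hqf : ContinuousOn qf (Set.Ioi 0))
    (hrf : ContinuousOn rf (Set.Ioi 0))
    (hqpos : ∀ t ∈ Set.Ioi (0:ℝ), 0 < qf t) (hrpos : ∀ t ∈ Set.Ioi (0:ℝ), 0 < rf t) :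
    opMeanOf f (cfc qf x) (cfc rf x) =
      cfc (fun t => Real.sqrt (qf t) *
        f ((Real.sqrt (qf t))⁻¹ * rf t * (Real.sqrt (qf t))⁻¹) * Real.sqrt (qf t)) x := by
  have hxsa : IsSelfAdjoint x := hx.isSelfAdjoint
  have hspec := spec_pos hx hxu
  have hq' : ContinuousOn qf (spectrum ℝ x) := hqf.mono hspec
  have hr' : ContinuousOn rf (spectrum ℝ x) := hrf.mono hspec
  have hsqc : ContinuousOn (fun t => Real.sqrt (qf t)) (spectrum ℝ x) :=
    Real.continuous_sqrt.comp_continuousOn hq'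
  have hsqpos : ∀ t ∈ spectrum ℝ x, 0 < Real.sqrt (qf t) :=
    fun t ht => Real.sqrt_pos.mpr (hqpos t (hspec ht))
  have hisqc : ContinuousOn (fun t => (Real.sqrt (qf t))⁻¹) (spectrum ℝ x) :=
    hsqc.inv₀ fun t ht => ne_of_gt (hsqpos t ht)
  have hwc : ContinuousOn
      (fun t => (Real.sqrt (qf t))⁻¹ * rf t * (Real.sqrt (qf t))⁻¹) (spectrum ℝ x) :=
    (hisqc.mul hr').mul hisqc
  have hwpos : ∀ t ∈ spectrum ℝ x,
      0 < (Real.sqrt (qf t))⁻¹ * rf t * (Real.sqrt (qf t))⁻¹ := fun t ht =>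
    mul_pos (mul_pos (inv_pos.mpr (hsqpos t ht)) (hrpos t (hspec ht))) (inv_pos.mpr (hsqpos t ht))
  have h1 : cfc Real.sqrt (cfc qf x) = cfc (fun t => Real.sqrt (qf t)) x :=
    (cfc_comp' Real.sqrt qf x Real.continuous_sqrt.continuousOn hq' hxsa).symm
  have h2 : Ring.inverse (cfc (fun t => Real.sqrt (qf t)) x) =
      cfc (fun t => (Real.sqrt (qf t))⁻¹) x :=
    (cfc_inv _ x (fun t ht => ne_of_gt (hsqpos t ht)) hsqc hxsa).symm
  have h3 : cfc (fun t => (Real.sqrt (qf t))⁻¹) x * cfc rf x *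
      cfc (fun t => (Real.sqrt (qf t))⁻¹) x =
      cfc (fun t => (Real.sqrt (qf t))⁻¹ * rf t * (Real.sqrt (qf t))⁻¹) x := by
    rw [cfc_mul _ _ x (hisqc.fun_mul hr') hisqc, cfc_mul _ _ x hisqc hr']
  have h4 : cfc f (cfc (fun t => (Real.sqrt (qf t))⁻¹ * rf t * (Real.sqrt (qf t))⁻¹) x) =
      cfc (fun t => f ((Real.sqrt (qf t))⁻¹ * rf t * (Real.sqrt (qf t))⁻¹)) x := by
    refine (cfc_comp' f _ x ?_ hwc hxsa).symm
    refine hf.mono ?_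
    rintro - ⟨t, ht, rfl⟩
    exact hwpos t ht
  have hfwc : ContinuousOn (fun t => f ((Real.sqrt (qf t))⁻¹ * rf t * (Real.sqrt (qf t))⁻¹))
      (spectrum ℝ x) := hf.comp hwc fun t ht => hwpos t ht
  show cfc Real.sqrt (cfc qf x) *
      cfc f (Ring.inverse (cfc Real.sqrt (cfc qf x)) * cfc rf x *
        Ring.inverse (cfc Real.sqrt (cfc qf x))) * cfc Real.sqrt (cfc qf x) = _
  rw [h1, h2, h3, h4, cfc_mul _ _ x (hsqc.fun_mul hfwc) hsqc, cfc_mul _ _ x hsqc hfwc]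

end ops2

/- ### the scalar identity -/

lemma scalar_key {v : ℝ} (hv0 : 0 < v) (hv1 : v < 1) {t : ℝ} (ht : t ∈ Set.Ioi (0:ℝ)) :
    wLogScalar v 1 t =
      (1 - v) • (Real.sqrt (t ^ v) *
          (fun x : ℝ => if x = 1 then 1 else (x - 1) / Real.log x)
            ((Real.sqrt (t ^ v))⁻¹ * (fun _ : ℝ => (1:ℝ)) t * (Real.sqrt (t ^ v))⁻¹) *
          Real.sqrt (t ^ v)) +
      v • (Real.sqrt (t ^ v) *
          (fun x : ℝ => if x = 1 then 1 else (x - 1) / Real.log x)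
            ((Real.sqrt (t ^ v))⁻¹ * id t * (Real.sqrt (t ^ v))⁻¹) *
          Real.sqrt (t ^ v)) := by
  have ht0 : (0:ℝ) < t := ht
  have hP : (0:ℝ) < t ^ v := Real.rpow_pos_of_pos ht0 v
  have hs0 : (0:ℝ) < Real.sqrt (t ^ v) := Real.sqrt_pos.mpr hP
  have hss : Real.sqrt (t ^ v) * Real.sqrt (t ^ v) = t ^ v := Real.mul_self_sqrt hP.le
  set s := Real.sqrt (t ^ v) with hsdef
  have harg1 : s⁻¹ * (fun _ : ℝ => (1:ℝ)) t * s⁻¹ = (t ^ v)⁻¹ := by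
    show s⁻¹ * 1 * s⁻¹ = (t ^ v)⁻¹
    rw [mul_one, ← mul_inv, hss]
  have harg2 : s⁻¹ * id t * s⁻¹ = t * (t ^ v)⁻¹ := by
    show s⁻¹ * t * s⁻¹ = t * (t ^ v)⁻¹
    have h' : s⁻¹ * t * s⁻¹ = t * (s⁻¹ * s⁻¹) := by ring
    rw [h', ← mul_inv, hss]
  rw [harg1, harg2]
  by_cases ht1 : t = 1
  · subst ht1
    rw [wLogScalar, if_pos rfl]
    simp only [hsdef, Real.one_rpow, Real.sqrt_one, inv_one, mul_one, one_mul,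
      eq_self_iff_true, if_true, if_pos rfl, smul_eq_mul]
    ring
  · have hL : Real.log t ≠ 0 := Real.log_ne_zero_of_pos_of_ne_one ht0 ht1
    have hlogP : Real.log (t ^ v) = v * Real.log t := Real.log_rpow ht0 v
    have hPne : t ^ v ≠ 1 := by
      intro h
      have := hlogP
      rw [h, Real.log_one] at this
      exact hL (by
        rcases mul_eq_zero.mp this.symm with h' | h'
        · exact absurd h' (ne_of_gt hv0)
        · exact h')
    have harg1ne : (t ^ v)⁻¹ ≠ 1 := fun h => hPne (by rw [← inv_inv (t ^ v), h, inv_one])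
    have harg2ne : t * (t ^ v)⁻¹ ≠ 1 := by
      intro h
      have hlog2 : Real.log (t * (t ^ v)⁻¹) = (1 - v) * Real.log t := by
        rw [Real.log_mul (ne_of_gt ht0) (inv_ne_zero hP.ne'), Real.log_inv, hlogP]; ring
      rw [h, Real.log_one] at hlog2
      rcases mul_eq_zero.mp hlog2.symm with h' | h'
      · exact absurd h' (sub_ne_zero.mpr (ne_of_gt hv1))
      · exact hL h'
    have hlog1 : Real.log ((t ^ v)⁻¹) = -(v * Real.log t) := by
      rw [Real.log_inv, hlogP]
    have hlog2 : Real.log (t * (t ^ v)⁻¹) = (1 - v) * Real.log t := by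
      rw [Real.log_mul (ne_of_gt ht0) (inv_ne_zero hP.ne'), Real.log_inv, hlogP]; ring
    rw [wLogScalar, if_neg (fun h => ht1 h.symm)]
    simp only [if_neg harg1ne, if_neg harg2ne]
    rw [hlog1, hlog2]
    have hszs : ∀ z : ℝ, s * z * s = t ^ v * z := fun z => by
      rw [← hss]; ring
    rw [hszs, hszs, smul_eq_mul, smul_eq_mul]
    rw [Real.log_one, Real.one_rpow]
    have hv1' : (1:ℝ) - v ≠ 0 := sub_ne_zero.mpr (ne_of_gt hv1)
    field_simp
    ring

/-- For positive invertible operators `A, B` on a complex Hilbert space and `v ∈ (0,1)`: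
`L_v(A,B) = (1-v)·L(A♯_v B, A) + v·L(A♯_v B, B)`. -/
theorem opWLog_eq_wArith_opLog (A B : H →L[ℂ] H)
    (hA : 0 ≤ A) (hB : 0 ≤ B) (hAu : IsUnit A) (hBu : IsUnit B)
    (v : ℝ) (hv : v ∈ Set.Ioo (0 : ℝ) 1) :
    opWLog v A B =
      (1 - v : ℝ) • opLog (opWGeom v A B) A + v • opLog (opWGeom v A B) B := by
  obtain ⟨hv0, hv1⟩ := hv
  have hS2 : cfc Real.sqrt A * cfc Real.sqrt A = A := sqrt_mul_self' hA
  have hSu : IsUnit (cfc Real.sqrt A) := sqrt_isUnit hA hAu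
  have hSsa : IsSelfAdjoint (cfc Real.sqrt A) := sqrt_sa hA
  have hS0 : 0 ≤ cfc Real.sqrt A := sqrt_nonneg' hA
  set S := cfc Real.sqrt A with hSdef
  set iS := Ring.inverse S with hiSdef
  have hSiS : S * iS = 1 := Ring.mul_inverse_cancel S hSu
  have hiSS : iS * S = 1 := Ring.inverse_mul_cancel S hSu
  have hiSsa : IsSelfAdjoint iS := hSsa.ringInverse
  set X := iS * B * iS with hXdef
  have hX0 : 0 ≤ X := by
    have := star_right_conjugate_nonneg hB iS
    rwa [hiSsa.star_eq] at this
  have hXu : IsUnit X := ((isUnit_ringInverse.mpr hSu).mul hBu).mul (isUnit_ringInverse.mpr hSu)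
  have hXsa : IsSelfAdjoint X := hX0.isSelfAdjoint
  have hXspec : spectrum ℝ X ⊆ Set.Ioi 0 := spec_pos hX0 hXu
  -- scalar functions
  have hfLc : ContinuousOn (fun x : ℝ => if x = 1 then 1 else (x - 1) / Real.log x)
      (Set.Ioi 0) := contOn_fL
  have hqc : ContinuousOn (fun t : ℝ => t ^ v) (Set.Ioi 0) := fun t ht =>
    (Real.continuousAt_rpow_const t v (Or.inl (ne_of_gt ht))).continuousWithinAt
  have hqpos : ∀ t ∈ Set.Ioi (0:ℝ), 0 < t ^ v := fun t ht => Real.rpow_pos_of_pos ht v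
  have honec : ContinuousOn (fun _ : ℝ => (1:ℝ)) (Set.Ioi 0) := continuousOn_const
  have honepos : ∀ t ∈ Set.Ioi (0:ℝ), (0:ℝ) < (fun _ : ℝ => (1:ℝ)) t := fun t _ => one_pos
  have hidc : ContinuousOn (id : ℝ → ℝ) (Set.Ioi 0) := continuousOn_id
  have hidpos : ∀ t ∈ Set.Ioi (0:ℝ), (0:ℝ) < id t := fun t ht => ht
  -- the geometric mean
  have hQ0 : 0 ≤ cfc (fun t : ℝ => t ^ v) X :=
    cfc_nonneg fun t ht => (Real.rpow_pos_of_pos (hXspec ht) v).le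
  have hQu : IsUnit (cfc (fun t : ℝ => t ^ v) X) :=
    (isUnit_cfc_iff _ X (hqc.mono hXspec) hXsa).mpr
      fun t ht => ne_of_gt (Real.rpow_pos_of_pos (hXspec ht) v)
  have hGeom : opWGeom v A B = S * cfc (fun t : ℝ => t ^ v) X * S := rfl
  have hA1 : A = S * 1 * S := by rw [mul_one, hS2]
  have hB1 : B = S * X * S := by
    rw [hXdef]
    calc B = (S * iS) * B * (iS * S) := by rw [hSiS, hiSS, one_mul, mul_one]
    _ = S * (iS * B * iS) * S := by noncomm_ring
  -- conjugation reductions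
  have hGA : opLog (opWGeom v A B) A =
      S * opMeanOf (fun x : ℝ => if x = 1 then 1 else (x - 1) / Real.log x)
        (cfc (fun t : ℝ => t ^ v) X) 1 * S := by
    rw [opLog, hGeom]
    nth_rewrite 1 [hA1]
    exact opMeanOf_conj _ hfLc hS0 hSu hQ0 hQu zero_le_one isUnit_one
  have hGB : opLog (opWGeom v A B) B =
      S * opMeanOf (fun x : ℝ => if x = 1 then 1 else (x - 1) / Real.log x)
        (cfc (fun t : ℝ => t ^ v) X) X * S := by
    rw [opLog, hGeom]
    nth_rewrite 1 [hB1]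
    exact opMeanOf_conj _ hfLc hS0 hSu hQ0 hQu hX0 hXu
  -- compute the inner means as cfc's of X
  have hone : (1 : H →L[ℂ] H) = cfc (fun _ : ℝ => (1:ℝ)) X := (cfc_const_one ℝ X hXsa).symm
  have hid : X = cfc (id : ℝ → ℝ) X := (cfc_id ℝ X hXsa).symm
  have hM1 : opMeanOf (fun x : ℝ => if x = 1 then 1 else (x - 1) / Real.log x)
      (cfc (fun t : ℝ => t ^ v) X) 1 =
      cfc (fun t => Real.sqrt (t ^ v) *
        (fun x : ℝ => if x = 1 then 1 else (x - 1) / Real.log x)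
          ((Real.sqrt (t ^ v))⁻¹ * (fun _ : ℝ => (1:ℝ)) t * (Real.sqrt (t ^ v))⁻¹) *
        Real.sqrt (t ^ v)) X := by
    rw [hone]
    exact opMeanOf_cfc _ _ _ X hX0 hXu hfLc hqc honec hqpos honepos
  have hM2 : opMeanOf (fun x : ℝ => if x = 1 then 1 else (x - 1) / Real.log x)
      (cfc (fun t : ℝ => t ^ v) X) X =
      cfc (fun t => Real.sqrt (t ^ v) *
        (fun x : ℝ => if x = 1 then 1 else (x - 1) / Real.log x)
          ((Real.sqrt (t ^ v))⁻¹ * id t * (Real.sqrt (t ^ v))⁻¹) *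
        Real.sqrt (t ^ v)) X := by
    nth_rewrite 2 [hid]
    exact opMeanOf_cfc _ _ _ X hX0 hXu hfLc hqc hidc hqpos hidpos
  rw [hGA, hGB, hM1, hM2]
  -- continuity of the two inner functions
  have hsqc : ContinuousOn (fun t : ℝ => Real.sqrt (t ^ v)) (Set.Ioi 0) :=
    Real.continuous_sqrt.comp_continuousOn hqc
  have hsqpos : ∀ t ∈ Set.Ioi (0:ℝ), 0 < Real.sqrt (t ^ v) :=
    fun t ht => Real.sqrt_pos.mpr (hqpos t ht)
  have hisqc : ContinuousOn (fun t : ℝ => (Real.sqrt (t ^ v))⁻¹) (Set.Ioi 0) :=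
    hsqc.inv₀ fun t ht => ne_of_gt (hsqpos t ht)
  have hg : ∀ (rf : ℝ → ℝ), ContinuousOn rf (Set.Ioi 0) → (∀ t ∈ Set.Ioi (0:ℝ), 0 < rf t) →
      ContinuousOn (fun t => Real.sqrt (t ^ v) *
        (fun x : ℝ => if x = 1 then 1 else (x - 1) / Real.log x)
          ((Real.sqrt (t ^ v))⁻¹ * rf t * (Real.sqrt (t ^ v))⁻¹) *
        Real.sqrt (t ^ v)) (Set.Ioi 0) := by
    intro rf hrfc hrfpos
    have hwc : ContinuousOn (fun t => (Real.sqrt (t ^ v))⁻¹ * rf t * (Real.sqrt (t ^ v))⁻¹)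
        (Set.Ioi 0) := (hisqc.mul hrfc).mul hisqc
    have hwpos : ∀ t ∈ Set.Ioi (0:ℝ),
        (0:ℝ) < (Real.sqrt (t ^ v))⁻¹ * rf t * (Real.sqrt (t ^ v))⁻¹ := fun t ht =>
      mul_pos (mul_pos (inv_pos.mpr (hsqpos t ht)) (hrfpos t ht)) (inv_pos.mpr (hsqpos t ht))
    exact (hsqc.mul (hfLc.comp hwc fun t ht => hwpos t ht)).mul hsqc
  have hg1 := hg _ honec honepos
  have hg2 := hg _ hidc hidpos
  -- collapse the right-hand side
  have hsm1 : (1 - v : ℝ) • (S * cfc (fun t => Real.sqrt (t ^ v) *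
        (fun x : ℝ => if x = 1 then 1 else (x - 1) / Real.log x)
          ((Real.sqrt (t ^ v))⁻¹ * (fun _ : ℝ => (1:ℝ)) t * (Real.sqrt (t ^ v))⁻¹) *
        Real.sqrt (t ^ v)) X * S) =
      S * cfc (fun t => (1 - v : ℝ) • (Real.sqrt (t ^ v) *
        (fun x : ℝ => if x = 1 then 1 else (x - 1) / Real.log x)
          ((Real.sqrt (t ^ v))⁻¹ * (fun _ : ℝ => (1:ℝ)) t * (Real.sqrt (t ^ v))⁻¹) *
        Real.sqrt (t ^ v))) X * S := by
    rw [cfc_smul (1 - v : ℝ) _ X (hg1.mono hXspec)]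
    simp only [smul_mul_assoc, mul_smul_comm]
  have hsm2 : (v : ℝ) • (S * cfc (fun t => Real.sqrt (t ^ v) *
        (fun x : ℝ => if x = 1 then 1 else (x - 1) / Real.log x)
          ((Real.sqrt (t ^ v))⁻¹ * id t * (Real.sqrt (t ^ v))⁻¹) *
        Real.sqrt (t ^ v)) X * S) =
      S * cfc (fun t => (v : ℝ) • (Real.sqrt (t ^ v) *
        (fun x : ℝ => if x = 1 then 1 else (x - 1) / Real.log x)
          ((Real.sqrt (t ^ v))⁻¹ * id t * (Real.sqrt (t ^ v))⁻¹) *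
        Real.sqrt (t ^ v))) X * S := by
    rw [cfc_smul (v : ℝ) _ X (hg2.mono hXspec)]
    simp only [smul_mul_assoc, mul_smul_comm]
  rw [hsm1, hsm2]
  have hadd : S * cfc (fun t => (1 - v : ℝ) • (Real.sqrt (t ^ v) *
        (fun x : ℝ => if x = 1 then 1 else (x - 1) / Real.log x)
          ((Real.sqrt (t ^ v))⁻¹ * (fun _ : ℝ => (1:ℝ)) t * (Real.sqrt (t ^ v))⁻¹) *
        Real.sqrt (t ^ v))) X * S +
      S * cfc (fun t => (v : ℝ) • (Real.sqrt (t ^ v) *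
        (fun x : ℝ => if x = 1 then 1 else (x - 1) / Real.log x)
          ((Real.sqrt (t ^ v))⁻¹ * id t * (Real.sqrt (t ^ v))⁻¹) *
        Real.sqrt (t ^ v))) X * S =
      S * cfc (fun t => (1 - v : ℝ) • (Real.sqrt (t ^ v) *
        (fun x : ℝ => if x = 1 then 1 else (x - 1) / Real.log x)
          ((Real.sqrt (t ^ v))⁻¹ * (fun _ : ℝ => (1:ℝ)) t * (Real.sqrt (t ^ v))⁻¹) *
        Real.sqrt (t ^ v)) + (v : ℝ) • (Real.sqrt (t ^ v) *
        (fun x : ℝ => if x = 1 then 1 else (x - 1) / Real.log x)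
          ((Real.sqrt (t ^ v))⁻¹ * id t * (Real.sqrt (t ^ v))⁻¹) *
        Real.sqrt (t ^ v))) X * S := by
    rw [cfc_add (a := X)
      (f := fun t => (1 - v : ℝ) • (Real.sqrt (t ^ v) *
        (fun x : ℝ => if x = 1 then 1 else (x - 1) / Real.log x)
          ((Real.sqrt (t ^ v))⁻¹ * (fun _ : ℝ => (1:ℝ)) t * (Real.sqrt (t ^ v))⁻¹) *
        Real.sqrt (t ^ v)))
      (g := fun t => (v : ℝ) • (Real.sqrt (t ^ v) *
        (fun x : ℝ => if x = 1 then 1 else (x - 1) / Real.log x)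
          ((Real.sqrt (t ^ v))⁻¹ * id t * (Real.sqrt (t ^ v))⁻¹) *
        Real.sqrt (t ^ v)))
      ((hg1.mono hXspec).fun_const_smul _) ((hg2.mono hXspec).fun_const_smul _)]
    rw [mul_add, add_mul]
  rw [hadd]
  show S * cfc (fun x => wLogScalar v 1 x) X * S = _
  congr 2
  exact cfc_congr fun t ht => scalar_key hv0 hv1 (hXspec ht)
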